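/- Let (A,ā) ∈ G = GL(2,ℤ) ⋉ 𝕋². Then (A,ā) is strongly reversible in G (i.e. reversed by an involution of G) if and only if there exists τ ∈ GL(2,ℤ) with τ² = I, τAτ⁻¹ = A⁻¹, and (Aτ + I)·ā ∈ Im(A − I) as a subset of 𝕋², where additionally a vector r̄ solving (Aτ+I)·ā + (A−I)·r̄ ≡ 0 can be chosen with (τ + I)·r̄ ≡ 0 (mod ℤ²). -/

import Mathlib

noncomputable section

abbrev V : Type := Fin 2 → ℝ

def L : AddSubgroup V where
  carrier := {x | ∀ i, ∃ n : ℤ, x i = (n : ℝ)}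
  zero_mem' := fun i => ⟨0, by simp⟩
  add_mem' := by
    rintro a b ha hb i
    obtain ⟨m, hm⟩ := ha i
    obtain ⟨n, hn⟩ := hb i
    exact ⟨m + n, by simp [hm, hn]⟩
  neg_mem' := by
    rintro a ha i
    obtain ⟨m, hm⟩ := ha i
    exact ⟨-m, by simp [hm]⟩

abbrev T2 := V ⧸ L

def actV (A : Matrix (Fin 2) (Fin 2) ℤ) : V →+ V :=
  (Matrix.mulVecLin (A.map (Int.cast : ℤ → ℝ))).toAddMonoidHom

lemma actV_mem (A : Matrix (Fin 2) (Fin 2) ℤ) : L ≤ L.comap (actV A) := by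
  intro x hx
  show actV A x ∈ L
  intro i
  refine ⟨∑ j, A i j * Classical.choose (hx j), ?_⟩
  show (A.map (Int.cast : ℤ → ℝ)).mulVec x i = _
  simp only [Matrix.mulVec, dotProduct, Matrix.map_apply]
  push_cast
  exact Finset.sum_congr rfl fun j _ =>
    congrArg (fun t => ((A i j : ℝ)) * t) (Classical.choose_spec (hx j))

/-- The action of an integer matrix on the torus `T2`. -/
def act (A : Matrix (Fin 2) (Fin 2) ℤ) : T2 →+ T2 :=
  QuotientAddGroup.map L L (actV A) (actV_mem A)

abbrev GL2 := (Matrix (Fin 2) (Fin 2) ℤ)ˣ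

/-- Multiplication in the group `G = GL(2,ℤ) ⋉ 𝕋²`. -/
def Gmul (p q : GL2 × T2) : GL2 × T2 :=
  (p.1 * q.1, act (p.1 : Matrix (Fin 2) (Fin 2) ℤ) q.2 + p.2)

/-- Inversion in the group `G = GL(2,ℤ) ⋉ 𝕋²`. -/
def Ginv (p : GL2 × T2) : GL2 × T2 :=
  (p.1⁻¹, -act ((p.1⁻¹ : GL2) : Matrix (Fin 2) (Fin 2) ℤ) p.2)

lemma castEq : (Int.cast : ℤ → ℝ) = ⇑(Int.castRingHom ℝ) := rfl

lemma act_mk (M : Matrix (Fin 2) (Fin 2) ℤ) (x : V) :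
    act M (QuotientAddGroup.mk x) = QuotientAddGroup.mk (actV M x) := rfl

lemma act_one (x : T2) : act 1 x = x := by
  induction x using QuotientAddGroup.induction_on with
  | H x =>
    rw [act_mk]
    congr 1
    show (Matrix.mulVecLin ((1 : Matrix (Fin 2) (Fin 2) ℤ).map (Int.cast : ℤ → ℝ))) x = x
    rw [castEq, Matrix.map_one _ (map_zero _) (map_one _), Matrix.mulVecLin_one]
    rfl

lemma act_mul (M N : Matrix (Fin 2) (Fin 2) ℤ) (x : T2) :
    act (M * N) x = act M (act N x) := by
  induction x using QuotientAddGroup.induction_on with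
  | H x =>
    rw [act_mk, act_mk, act_mk]
    congr 1
    show (Matrix.mulVecLin ((M * N).map (Int.cast : ℤ → ℝ))) x = _
    rw [castEq, Matrix.map_mul, Matrix.mulVecLin_mul]
    rfl

lemma act_add (M N : Matrix (Fin 2) (Fin 2) ℤ) (x : T2) :
    act (M + N) x = act M x + act N x := by
  induction x using QuotientAddGroup.induction_on with
  | H x =>
    rw [act_mk, act_mk, act_mk, ← QuotientAddGroup.mk_add]
    congr 1
    show (Matrix.mulVecLin ((M + N).map (Int.cast : ℤ → ℝ))) x = _
    rw [castEq, Matrix.map_add _ (fun a b => by simp), Matrix.mulVecLin_add]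
    rfl

lemma act_sub (M N : Matrix (Fin 2) (Fin 2) ℤ) (x : T2) :
    act (M - N) x = act M x - act N x := by
  have := act_add (M - N) N x
  rw [sub_add_cancel] at this
  rw [this]; abel

lemma act_cancel (U : GL2) (x : T2) :
    act (U : Matrix (Fin 2) (Fin 2) ℤ) (act ((U⁻¹ : GL2) : Matrix (Fin 2) (Fin 2) ℤ) x) = x := by
  rw [← act_mul, U.mul_inv, act_one]

lemma act_cancel' (U : GL2) (x : T2) :
    act ((U⁻¹ : GL2) : Matrix (Fin 2) (Fin 2) ℤ) (act (U : Matrix (Fin 2) (Fin 2) ℤ) x) = x := by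
  rw [← act_mul, U.inv_mul, act_one]

lemma aux_iff {G : Type*} [AddCommGroup G] (x y z w : G) :
    x + y + (w - z) = 0 ↔ -z + (x + w) = -y := by
  rw [eq_neg_iff_add_eq_zero, show -z + (x + w) + y = x + y + (w - z) from by abel]

/-- `(A,ā) ∈ G = GL(2,ℤ) ⋉ 𝕋²` is strongly reversible (reversed by an involution of `G`)
iff there exists `τ ∈ GL(2,ℤ)` with `τ² = I`, `τAτ⁻¹ = A⁻¹`, and a vector `r̄ ∈ 𝕋²` with
`(Aτ + I)·ā + (A - I)·r̄ ≡ 0` and `(τ + I)·r̄ ≡ 0 (mod ℤ²)`. -/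
theorem strongly_reversible_iff (A : GL2) (a : T2) :
    (∃ h : GL2 × T2, Gmul h h = (1, 0) ∧
        Gmul (Gmul h (A, a)) (Ginv h) = Ginv (A, a)) ↔
    (∃ τ : GL2, ∃ r : T2,
      (τ : Matrix (Fin 2) (Fin 2) ℤ) * (τ : Matrix (Fin 2) (Fin 2) ℤ) = 1 ∧
      τ * A * τ⁻¹ = A⁻¹ ∧
      act ((A : Matrix (Fin 2) (Fin 2) ℤ) * (τ : Matrix (Fin 2) (Fin 2) ℤ) + 1) a +
        act ((A : Matrix (Fin 2) (Fin 2) ℤ) - 1) r = 0 ∧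
      act ((τ : Matrix (Fin 2) (Fin 2) ℤ) + 1) r = 0) := by
  have AAinv : ((A : Matrix (Fin 2) (Fin 2) ℤ) * ((A⁻¹ : GL2) : Matrix (Fin 2) (Fin 2) ℤ)) = 1 :=
    A.mul_inv
  have AinvA : (((A⁻¹ : GL2) : Matrix (Fin 2) (Fin 2) ℤ) * (A : Matrix (Fin 2) (Fin 2) ℤ)) = 1 :=
    A.inv_mul
  constructor
  · rintro ⟨⟨τ, r⟩, hsq, hconj⟩
    rw [Prod.ext_iff] at hsq hconj
    simp only [Gmul, Ginv] at hsq hconj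
    obtain ⟨h1, h2⟩ := hsq
    obtain ⟨c1, c2⟩ := hconj
    rw [map_neg, ← act_mul, ← Units.val_mul, c1] at c2
    refine ⟨τ, r, ?_, c1, ?_, ?_⟩
    · have := congrArg Units.val h1
      simpa using this
    · rw [act_add, act_one, act_sub, act_one, act_mul, aux_iff]
      have := congrArg (act (A : Matrix (Fin 2) (Fin 2) ℤ)) c2
      rw [map_add, map_neg, map_neg, map_add, act_cancel, act_cancel] at this
      exact this
    · rw [act_add, act_one]
      exact h2
  · rintro ⟨τ, r, hττ, hconj, h3, h4⟩
    have hτu : τ * τ = 1 := Units.ext (by simpa using hττ)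
    refine ⟨(τ, r), ?_, ?_⟩
    · rw [Prod.ext_iff]
      refine ⟨hτu, ?_⟩
      show act (τ : Matrix (Fin 2) (Fin 2) ℤ) r + r = 0
      rw [act_add, act_one] at h4
      exact h4
    · rw [Prod.ext_iff]
      refine ⟨hconj, ?_⟩
      show act ((τ * A : GL2) : Matrix (Fin 2) (Fin 2) ℤ)
          (-act (((τ⁻¹ : GL2) : Matrix (Fin 2) (Fin 2) ℤ)) r) + (act (τ : Matrix (Fin 2) (Fin 2) ℤ) a + r)
          = -act (((A⁻¹ : GL2) : Matrix (Fin 2) (Fin 2) ℤ)) a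
      rw [map_neg, ← act_mul, ← Units.val_mul, hconj]
      rw [act_add, act_one, act_sub, act_one, act_mul, aux_iff] at h3
      have := congrArg (act (((A⁻¹ : GL2) : Matrix (Fin 2) (Fin 2) ℤ))) h3
      rw [map_add, map_neg, map_neg, map_add, act_cancel', act_cancel'] at this
      exact this
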